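/- For any lattice path P from (0,0) to (n,n) with unit steps, the n+1 cyclic shifts of the vector c(P) = (c_0,...,c_n), where c_i is the number of horizontal steps of P at height i, determine n+1 lattice paths whose exceedances are exactly the numbers 0,1,...,n in some order. -/

import Mathlib

open scoped Classical

open Fin.NatCast in
/-- A lattice path from `(0,0)` to `(n,n)` is encoded by the vector
`c : Fin (n+1) → ℕ` (with `∑ c = n`) of its numbers of horizontal steps at
each height. `psum c y` is `c_0 + ⋯ + c_{y-1}`; the point `(i, y)` lies on
the path iff `psum c y ≤ i ≤ psum c (y+1)`. -/
noncomputable def psum {n : ℕ} (c : Fin (n + 1) → ℕ) (y : ℕ) : ℕ :=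
  ∑ z ∈ Finset.range y, c (z : Fin (n + 1))

/-- The exceedance of the lattice path with horizontal-step vector `c`:
the number of `i ∈ {0,…,n}` such that the path contains a point `(i, y)`
with `y > i`. -/
noncomputable def excPath {n : ℕ} (c : Fin (n + 1) → ℕ) : ℕ :=
  ((Finset.range (n + 1)).filter (fun i =>
    ∃ y ≤ n, i < y ∧ psum c y ≤ i ∧ i ≤ psum c (y + 1))).card

open Fin.NatCast Fin.CommRing

namespace CFaux

lemma psum_mono {n : ℕ} (c : Fin (n + 1) → ℕ) : Monotone (psum c) := by
  intro a b hab
  exact Finset.sum_le_sum_of_subset (Finset.range_subset_range.2 hab)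

lemma psum_add {n : ℕ} (c : Fin (n + 1) → ℕ) (m y : ℕ) :
    psum c (m + y) = psum c m + ∑ w ∈ Finset.range y, c ((w : Fin (n + 1)) + (m : Fin (n + 1))) := by
  induction y with
  | zero => simp
  | succ y ih =>
      rw [← Nat.add_assoc, psum, Finset.sum_range_succ, ← psum, ih, Finset.sum_range_succ]
      have h : ((m + y : ℕ) : Fin (n + 1)) = (y : Fin (n + 1)) + (m : Fin (n + 1)) := by
        push_cast; ring
      rw [h, Nat.add_assoc]

lemma sum_range_shift {n : ℕ} (c : Fin (n + 1) → ℕ) (m : Fin (n + 1)) :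
    ∑ w ∈ Finset.range (n + 1), c ((w : Fin (n + 1)) + m) = ∑ z, c z := by
  rw [← Fin.sum_univ_eq_sum_range (fun w => c ((w : Fin (n + 1)) + m))]
  simp only [Fin.cast_val_eq_self]
  exact Fintype.sum_equiv (Equiv.addRight m) _ _ (fun z => rfl)

lemma psum_top {n : ℕ} (c : Fin (n + 1) → ℕ) (hc : ∑ z, c z = n) :
    psum c (n + 1) = n := by
  rw [psum, ← Fin.sum_univ_eq_sum_range (fun z => c ((z : ℕ) : Fin (n + 1)))]
  simp only [Fin.cast_val_eq_self]
  exact hc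

lemma exc_eq {n : ℕ} (c : Fin (n + 1) → ℕ) (hc : ∑ z, c z = n) :
    excPath c = ((Finset.range n).filter (fun i => psum c (i + 1) ≤ i)).card := by
  unfold excPath
  congr 1
  ext i
  simp only [Finset.mem_filter, Finset.mem_range]
  constructor
  · rintro ⟨hi, y, hyn, hiy, h1, _⟩
    exact ⟨by omega, le_trans (psum_mono c hiy) h1⟩
  · rintro ⟨hin, hpi⟩
    refine ⟨by omega, ?_⟩
    have hex : ∃ Y, i + 1 ≤ Y ∧ Y ≤ n ∧ psum c Y ≤ i ∧ (Y = n ∨ ¬ psum c (Y + 1) ≤ i) := by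
      refine ⟨Nat.findGreatest (fun y => psum c y ≤ i) n,
        Nat.le_findGreatest (P := fun y => psum c y ≤ i) (by omega) hpi,
        Nat.findGreatest_le (P := fun y => psum c y ≤ i) n,
        Nat.findGreatest_spec (P := fun y => psum c y ≤ i) (m := i + 1) (by omega) hpi, ?_⟩
      rcases Nat.lt_or_ge (Nat.findGreatest (fun y => psum c y ≤ i) n) n with h | h
      · exact Or.inr (Nat.findGreatest_is_greatest (P := fun y => psum c y ≤ i)
          (lt_add_one _) h)
      · exact Or.inl (le_antisymm (Nat.findGreatest_le (P := fun y => psum c y ≤ i) n) h)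
    obtain ⟨Y, hY1, hY2, hY3, hY4⟩ := hex
    refine ⟨Y, hY2, by omega, hY3, ?_⟩
    rcases hY4 with h | h
    · rw [h, psum_top c hc]; omega
    · omega

lemma v_lt_iff (n : ℕ) (t : ℕ → ℤ) (m j : Fin (n + 1)) (hne : m.val ≠ j.val) :
    ((n : ℤ) + 2) * t m.val + m.val < ((n : ℤ) + 2) * t j.val + j.val ↔
      (t m.val < t j.val ∨ (t m.val = t j.val ∧ m.val < j.val)) := by
  have h1 : (m.val : ℤ) ≤ n := by exact_mod_cast Fin.is_le m
  have h2 : (j.val : ℤ) ≤ n := by exact_mod_cast Fin.is_le j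
  have h0m : (0 : ℤ) ≤ m.val := Int.natCast_nonneg _
  have h0j : (0 : ℤ) ≤ j.val := Int.natCast_nonneg _
  rcases lt_trichotomy (t m.val) (t j.val) with h | h | h
  · have key : ((n : ℤ) + 2) * (t m.val + 1) ≤ ((n : ℤ) + 2) * t j.val :=
      mul_le_mul_of_nonneg_left (by omega) (by linarith)
    constructor
    · intro _; exact Or.inl h
    · intro _; nlinarith [key]
  · rw [h]
    simp [Nat.cast_lt]
  · have key : ((n : ℤ) + 2) * (t j.val + 1) ≤ ((n : ℤ) + 2) * t m.val :=
      mul_le_mul_of_nonneg_left (by omega) (by linarith)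
    constructor
    · intro hlt; exfalso; nlinarith [key]
    · rintro (hlt | ⟨heq, _⟩)
      · omega
      · omega

lemma rank_image {N : ℕ} (v : Fin N → ℤ) (hv : Function.Injective v) :
    Finset.image (fun j => (Finset.univ.filter (fun m => v m < v j)).card) Finset.univ
      = Finset.range N := by
  have hmono : ∀ j j' : Fin N, v j < v j' →
      (Finset.univ.filter (fun m => v m < v j)).card
        < (Finset.univ.filter (fun m => v m < v j')).card := by
    intro j j' h
    apply Finset.card_lt_card
    constructor
    · intro m hm
      simp only [Finset.mem_filter, Finset.mem_univ, true_and] at hm ⊢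
      exact lt_trans hm h
    · intro hsub
      have hj : j ∈ Finset.univ.filter (fun m => v m < v j') := by simp [h]
      have := hsub hj
      simp only [Finset.mem_filter, Finset.mem_univ, true_and] at this
      exact absurd this (lt_irrefl _)
  have hinj : Function.Injective
      (fun j : Fin N => (Finset.univ.filter (fun m => v m < v j)).card) := by
    intro j j' h
    by_contra hne
    rcases lt_or_gt_of_ne (fun hvv => hne (hv hvv)) with h' | h'
    · exact absurd h (ne_of_lt (hmono _ _ h'))
    · exact absurd h.symm (ne_of_lt (hmono _ _ h'))
  apply Finset.eq_of_subset_of_card_le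
  · intro x hx
    simp only [Finset.mem_image, Finset.mem_univ, true_and] at hx
    obtain ⟨j, rfl⟩ := hx
    simp only [Finset.mem_range]
    have hj : j ∉ Finset.univ.filter (fun m => v m < v j) := by simp
    have hss : Finset.univ.filter (fun m => v m < v j) ⊂ Finset.univ :=
      ⟨Finset.filter_subset _ _, fun hsub => hj (hsub (Finset.mem_univ j))⟩
    have := Finset.card_lt_card hss
    simpa using this
  · rw [Finset.card_range, Finset.card_image_of_injective _ hinj, Finset.card_univ,
      Fintype.card_fin]

end CFaux

/-- Chung–Feller, cyclic form: the `n+1` cyclic shifts of the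
horizontal-step vector `c(P)` of a lattice path from `(0,0)` to `(n,n)`
determine `n+1` lattice paths whose exceedances are exactly `0, 1, …, n`
in some order. -/
theorem exc_of_cyclicShifts (n : ℕ) (c : Fin (n + 1) → ℕ) (hc : ∑ z, c z = n) :
    Finset.image (fun j : Fin (n + 1) => excPath (fun z => c (z + j))) Finset.univ
      = Finset.range (n + 1) := by
  classical
  set t : ℕ → ℤ := fun m => (psum c m : ℤ) - m with ht
  set v : Fin (n + 1) → ℤ := fun m => ((n : ℤ) + 2) * t m.val + m.val with hv
  have hper : ∀ m : ℕ, t (m + (n + 1)) = t m - 1 := by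
    intro m
    have h : psum c (m + (n + 1)) = psum c m + n := by
      rw [CFaux.psum_add, CFaux.sum_range_shift, hc]
    simp only [ht, h]
    push_cast
    ring
  -- injectivity of v
  have hvinj : Function.Injective v := by
    intro m j hmj
    by_contra hne
    have hvalne : m.val ≠ j.val := fun h => hne (Fin.val_injective h)
    have hor : v m < v j ∨ v j < v m := by
      rcases lt_trichotomy (t m.val) (t j.val) with h | h | h
      · exact Or.inl ((CFaux.v_lt_iff n t m j hvalne).mpr (Or.inl h))
      · rcases Nat.lt_or_ge m.val j.val with h' | h'
        · exact Or.inl ((CFaux.v_lt_iff n t m j hvalne).mpr (Or.inr ⟨h, h'⟩))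
        · exact Or.inr ((CFaux.v_lt_iff n t j m (Ne.symm hvalne)).mpr
            (Or.inr ⟨h.symm, by omega⟩))
      · exact Or.inr ((CFaux.v_lt_iff n t j m (Ne.symm hvalne)).mpr (Or.inl h))
    rcases hor with h | h <;> omega
  -- main computation of exceedance of each shift
  have hexc : ∀ j : Fin (n + 1),
      excPath (fun z => c (z + j)) = (Finset.univ.filter (fun m => v m < v j)).card := by
    intro j
    have hsum : ∑ z, c (z + j) = n := by
      have heq : (∑ z, c (z + j)) = ∑ z, c z :=
        Fintype.sum_equiv (Equiv.addRight j) _ _ (fun z => rfl)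
      rw [heq, hc]
    rw [CFaux.exc_eq _ hsum]
    have hps : ∀ y : ℕ, psum c (j.val + y) = psum c j.val + psum (fun z => c (z + j)) y := by
      intro y
      rw [CFaux.psum_add, Fin.cast_val_eq_self]
      rfl
    have hcond : ∀ i, i < n →
        (psum (fun z => c (z + j)) (i + 1) ≤ i ↔ v ((i : Fin (n + 1)) + j + 1) < v j) := by
      intro i hi
      have hb : (psum (fun z => c (z + j)) (i + 1) ≤ i ↔ t (j.val + i + 1) < t j.val) := by
        have hq := hps (i + 1)
        simp only [ht]
        rw [show j.val + i + 1 = j.val + (i + 1) by omega, hq]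
        push_cast
        omega
      rw [hb]
      have hmval : ((i : Fin (n + 1)) + j + 1).val = (i + j.val + 1) % (n + 1) := by
        have h : ((i : Fin (n + 1)) + j + 1) = ((i + j.val + 1 : ℕ) : Fin (n + 1)) := by
          push_cast
          rfl
        rw [h, Fin.val_natCast]
      rcases Nat.lt_or_ge (i + j.val + 1) (n + 1) with hcase | hcase
      · -- no wraparound
        have hval : ((i : Fin (n + 1)) + j + 1).val = i + j.val + 1 := by
          rw [hmval, Nat.mod_eq_of_lt hcase]
        have hne : ((i : Fin (n + 1)) + j + 1).val ≠ j.val := by omega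
        rw [hv]
        rw [CFaux.v_lt_iff n t _ j hne]
        rw [hval]
        rw [show j.val + i + 1 = i + j.val + 1 by omega]
        constructor
        · intro h; exact Or.inl h
        · rintro (h | ⟨_, h⟩)
          · exact h
          · omega
      · -- wraparound
        set k := i + j.val + 1 - (n + 1) with hk
        have hklt : k < j.val := by omega
        have hval : ((i : Fin (n + 1)) + j + 1).val = k := by
          rw [hmval, Nat.mod_eq_sub_mod hcase, ← hk, Nat.mod_eq_of_lt (by omega)]
        have hne : ((i : Fin (n + 1)) + j + 1).val ≠ j.val := by omega
        have htk : t (j.val + i + 1) = t k - 1 := by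
          rw [show j.val + i + 1 = k + (n + 1) by omega]
          exact hper k
        rw [htk, hv, CFaux.v_lt_iff n t _ j hne, hval]
        constructor
        · intro h
          rcases lt_or_eq_of_le (by omega : t k ≤ t j.val) with h' | h'
          · exact Or.inl h'
          · exact Or.inr ⟨h', hklt⟩
        · rintro (h | ⟨h, _⟩) <;> omega
    -- bijection between the two counting sets
    refine Finset.card_bij (fun (i : ℕ) (_ : i ∈ (Finset.range n).filter
        (fun i => psum (fun z => c (z + j)) (i + 1) ≤ i)) => (i : Fin (n + 1)) + j + 1)
      ?_ ?_ ?_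
    · intro i hi
      simp only [Finset.mem_filter, Finset.mem_range] at hi
      simp only [Finset.mem_filter, Finset.mem_univ, true_and]
      exact (hcond i hi.1).mp hi.2
    · intro i1 h1 i2 h2 heq
      simp only [Finset.mem_filter, Finset.mem_range] at h1 h2
      have hfe : (i1 : Fin (n + 1)) = i2 := add_right_cancel (add_right_cancel heq)
      have v1 : ((i1 : Fin (n + 1))).val = i1 := Fin.val_cast_of_lt (by omega)
      have v2 : ((i2 : Fin (n + 1))).val = i2 := Fin.val_cast_of_lt (by omega)
      rw [← v1, ← v2, hfe]
    · intro m hm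
      simp only [Finset.mem_filter, Finset.mem_univ, true_and] at hm
      have hmj : m ≠ j := by
        intro h; rw [h] at hm; exact absurd hm (lt_irrefl _)
      have hiF : (((m - j - 1).val : ℕ) : Fin (n + 1)) = m - j - 1 := Fin.cast_val_eq_self _
      have him : (((m - j - 1).val : ℕ) : Fin (n + 1)) + j + 1 = m := by rw [hiF]; ring
      have hin : (m - j - 1).val < n := by
        have hlt : (m - j - 1).val < n + 1 := (m - j - 1).isLt
        rcases Nat.lt_or_ge (m - j - 1).val n with h | h
        · exact h
        · exfalso
          have hvaln : (m - j - 1).val = n := by omega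
          have heqn : m - j - 1 = ((n : ℕ) : Fin (n + 1)) := by
            rw [← Fin.cast_val_eq_self (m - j - 1), hvaln]
          have hm0 : m = ((n : ℕ) : Fin (n + 1)) + j + 1 := by rw [← heqn]; ring
          have hz : ((n : ℕ) : Fin (n + 1)) + 1 = 0 := by
            rw [show ((n : ℕ) : Fin (n + 1)) + 1 = ((n + 1 : ℕ) : Fin (n + 1)) by
              push_cast; ring]
            exact Fin.natCast_self (n + 1)
          apply hmj
          rw [hm0, show ((n : ℕ) : Fin (n + 1)) + j + 1
              = j + (((n : ℕ) : Fin (n + 1)) + 1) by ring, hz, add_zero]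
      refine ⟨(m - j - 1).val, ?_, ?_⟩
      · simp only [Finset.mem_filter, Finset.mem_range]
        refine ⟨hin, (hcond _ hin).mpr ?_⟩
        rw [him]; exact hm
      · exact him
  -- conclude
  have himage : (fun j : Fin (n + 1) => excPath (fun z => c (z + j)))
      = fun j => (Finset.univ.filter (fun m => v m < v j)).card := funext hexc
  rw [himage]
  exact CFaux.rank_image v hvinj
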